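/- Let λ > 0 be such that S_λ := {m ∈ ℤ² : |m|² = λ} is nonempty, and set u(x) := Σ_{m ∈ S_λ} e^{2πi m·x}. Then ∫_{[0,1]²} |u(x)|⁴ dx = 3·|S_λ|² − 3·|S_λ|, where |S_λ| denotes the cardinality of S_λ. -/

import Mathlib

open MeasureTheory Real

noncomputable section


lemma ortho3 (s1 s2 u1 u2 w1 w2 : ℤ) (hs : s1 ≠ 0 ∨ s2 ≠ 0)
    (su : s1 * u1 + s2 * u2 = 0) (wu : w1 * u1 + w2 * u2 = 0)
    (ws : w1 * s1 + w2 * s2 = 0) :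
    (w1 = 0 ∧ w2 = 0) ∨ (u1 = 0 ∧ u2 = 0) := by
  have det0 : w1 * u2 - w2 * u1 = 0 := by
    have t1 : (w1 * u2 - w2 * u1) * s1 = 0 := by linear_combination u2 * ws - w2 * su
    have t2 : (w1 * u2 - w2 * u1) * s2 = 0 := by linear_combination w1 * su - u1 * ws
    rcases hs with h | h
    · exact (mul_eq_zero.1 t1).resolve_right h
    · exact (mul_eq_zero.1 t2).resolve_right h
  have lag : (w1^2 + w2^2) * (u1^2 + u2^2) = 0 := by
    linear_combination (w1*u1 + w2*u2) * wu + (w1*u2 - w2*u1) * det0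
  rcases mul_eq_zero.1 lag with h | h
  · left; constructor <;> nlinarith [sq_nonneg w1, sq_nonneg w2]
  · right; constructor <;> nlinarith [sq_nonneg u1, sq_nonneg u2]

lemma circle_sum_eq {a b c d : ℤ × ℤ}
    (hb : a.1^2 + a.2^2 = b.1^2 + b.2^2)
    (hc : a.1^2 + a.2^2 = c.1^2 + c.2^2)
    (hd : a.1^2 + a.2^2 = d.1^2 + d.2^2)
    (h1 : a.1 + b.1 = c.1 + d.1) (h2 : a.2 + b.2 = c.2 + d.2)
    (hs : ¬ (a.1 + b.1 = 0 ∧ a.2 + b.2 = 0)) :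
    (c = a ∧ d = b) ∨ (c = b ∧ d = a) := by
  obtain ⟨a1, a2⟩ := a; obtain ⟨b1, b2⟩ := b; obtain ⟨c1, c2⟩ := c; obtain ⟨d1, d2⟩ := d
  simp only [Prod.mk.injEq] at *
  have e1 : 2 * (a1 * (a1+b1) + a2 * (a2+b2)) = (a1+b1)^2 + (a2+b2)^2 := by nlinarith [hb]
  have e2 : 2 * (c1 * (a1+b1) + c2 * (a2+b2)) = (a1+b1)^2 + (a2+b2)^2 := by
    have hd1 : d1 = (a1+b1) - c1 := by omega
    have hd2 : d2 = (a2+b2) - c2 := by omega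
    have hcd : c1^2 + c2^2 = d1^2 + d2^2 := by omega
    rw [hd1, hd2] at hcd; nlinarith [hcd]
  have key := ortho3 (a1+b1) (a2+b2) (a1-c1) (a2-c2) (a1+c1-(a1+b1)) (a2+c2-(a2+b2))
    (by omega)
    (by linarith [e1, e2])
    (by nlinarith [hc, e1, e2])
    (by linarith [e1, e2])
  rcases key with ⟨p, q⟩ | ⟨p, q⟩
  · right; omega
  · left; omega



lemma exp_int_integral (n : ℤ) :
    ∫ x in Set.Icc (0:ℝ) 1, Complex.exp (2 * (π : ℂ) * Complex.I * n * x) =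
      if n = 0 then 1 else 0 := by
  rw [integral_Icc_eq_integral_Ioc, ← intervalIntegral.integral_of_le zero_le_one]
  by_cases h : n = 0
  · simp [h]
  · rw [if_neg h]
    have hc : 2 * (π : ℂ) * Complex.I * n ≠ 0 := by
      simp [Complex.I_ne_zero, Real.pi_ne_zero, h]
    rw [integral_exp_mul_complex hc]
    have : Complex.exp (2 * (π : ℂ) * Complex.I * n * (1:ℝ)) = 1 := by
      rw [show 2 * (π : ℂ) * Complex.I * n * (1:ℝ) = n * (2 * π * Complex.I) by push_cast; ring]
      exact Complex.exp_int_mul_two_pi_mul_I n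
    rw [this]
    simp

lemma exp_prod_integral (m : ℤ × ℤ) :
    ∫ x in Set.Icc (0:ℝ) 1 ×ˢ Set.Icc (0:ℝ) 1,
      Complex.exp (2 * (π : ℂ) * Complex.I * ((m.1 : ℂ) * x.1 + (m.2 : ℂ) * x.2)) =
      if m = 0 then 1 else 0 := by
  have : ∀ x : ℝ × ℝ,
      Complex.exp (2 * (π : ℂ) * Complex.I * ((m.1 : ℂ) * x.1 + (m.2 : ℂ) * x.2)) =
      Complex.exp (2 * (π : ℂ) * Complex.I * m.1 * x.1) *
        Complex.exp (2 * (π : ℂ) * Complex.I * m.2 * x.2) := by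
    intro x; rw [← Complex.exp_add]; ring_nf
  rw [Measure.volume_eq_prod]
  simp_rw [this]
  rw [MeasureTheory.setIntegral_prod_mul (fun a : ℝ => Complex.exp (2 * (π : ℂ) * Complex.I * m.1 * a))
      (fun b : ℝ => Complex.exp (2 * (π : ℂ) * Complex.I * m.2 * b)) (Set.Icc 0 1) (Set.Icc 0 1),
    exp_int_integral, exp_int_integral]
  rcases eq_or_ne m 0 with h | h
  · simp [h]
  · rw [if_neg h]
    have h' : ¬ (m.1 = 0 ∧ m.2 = 0) := by
      intro ⟨p, q⟩; exact h (Prod.ext p q)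
    by_cases h1 : m.1 = 0
    · have h2 : m.2 ≠ 0 := by tauto
      simp [h1, h2]
    · simp [h1]

lemma count_lemma (lam : ℝ) (hlam : 0 < lam) (S : Finset (ℤ × ℤ))
    (hS : ∀ m : ℤ × ℤ, m ∈ S ↔ ((m.1 : ℝ) ^ 2 + (m.2 : ℝ) ^ 2 = lam)) :
    (((((S ×ˢ S) ×ˢ (S ×ˢ S)).filter
        (fun p : ((ℤ×ℤ)×(ℤ×ℤ)) × ((ℤ×ℤ)×(ℤ×ℤ)) => p.1.1 + p.1.2 = p.2.1 + p.2.2)).card : ℝ))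
      = 3 * (S.card : ℝ)^2 - 3 * (S.card : ℝ) := by
  classical
  have hne0 : ∀ m : ℤ × ℤ, m ∈ S → m ≠ 0 := by
    intro m hm h0
    rw [h0] at hm
    have := (hS 0).1 hm
    simp at this
    exact absurd this.symm (ne_of_gt hlam)
  have hneg : ∀ m : ℤ × ℤ, m ∈ S → -m ∈ S := by
    intro m hm
    rw [hS]
    have := (hS m).1 hm
    push_cast
    simpa [neg_sq] using this
  have hnorm_eq : ∀ a ∈ S, ∀ b ∈ S, a.1^2 + a.2^2 = b.1^2 + b.2^2 := by
    intro a ha b hb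
    have h1 := (hS a).1 ha; have h2 := (hS b).1 hb
    have : ((a.1^2 + a.2^2 : ℤ) : ℝ) = ((b.1^2 + b.2^2 : ℤ) : ℝ) := by push_cast; rw [h1, h2]
    exact_mod_cast this
  set n := S.card with hn
  set T := (((S ×ˢ S) ×ˢ (S ×ˢ S)).filter
        (fun p : ((ℤ×ℤ)×(ℤ×ℤ)) × ((ℤ×ℤ)×(ℤ×ℤ)) => p.1.1 + p.1.2 = p.2.1 + p.2.2)) with hT
  set T0 := T.filter (fun p => p.1.1 + p.1.2 = (0:ℤ×ℤ)) with hT0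
  set T1 := T.filter (fun p => ¬ p.1.1 + p.1.2 = (0:ℤ×ℤ)) with hT1
  have hsplit : T0.card + T1.card = T.card :=
    Finset.card_filter_add_card_filter_not _
  -- T0 has card n^2
  have hT0card : T0.card = n * n := by
    rw [← Finset.card_product S S]
    refine (Finset.card_nbij (fun q : (ℤ×ℤ)×(ℤ×ℤ) => ((q.1, -q.1), (q.2, -q.2))) ?_ ?_ ?_).symm
    · rintro ⟨a, c⟩ hq
      rw [Finset.mem_coe, Finset.mem_product] at hq
      simp only [Finset.mem_coe, hT0, hT, Finset.mem_filter, Finset.mem_product]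
      exact ⟨⟨⟨⟨hq.1, hneg _ hq.1⟩, hq.2, hneg _ hq.2⟩, by simp⟩, by simp⟩
    · rintro ⟨a, c⟩ _ ⟨a', c'⟩ _ h
      simp only [Prod.mk.injEq] at h
      exact Prod.ext h.1.1 h.2.1
    · intro p hp
      simp only [Finset.coe_filter, Set.mem_setOf_eq, hT0, hT, Finset.mem_filter,
        Finset.mem_product] at hp
      obtain ⟨⟨⟨⟨h11, h12⟩, h21, h22⟩, heq⟩, hz⟩ := hp
      have e1 : p.1.2 = -p.1.1 := eq_neg_of_add_eq_zero_right hz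
      have e2 : p.2.2 = -p.2.1 := eq_neg_of_add_eq_zero_right (heq ▸ hz)
      refine ⟨(p.1.1, p.2.1), ?_, ?_⟩
      · simp [Finset.mem_coe, Finset.mem_product, h11, h21]
      · show ((p.1.1, -p.1.1), (p.2.1, -p.2.1)) = p
        rw [← e1, ← e2]
  -- pairs with nonzero sum
  set P := (S ×ˢ S).filter (fun q : (ℤ×ℤ)×(ℤ×ℤ) => ¬ q.1 + q.2 = 0) with hP
  have hPcard : ((S ×ˢ S).filter (fun q : (ℤ×ℤ)×(ℤ×ℤ) => q.1 + q.2 = 0)).card + P.card = n * n := by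
    rw [← Finset.card_product S S]
    exact Finset.card_filter_add_card_filter_not _
  have hzcard : ((S ×ˢ S).filter (fun q : (ℤ×ℤ)×(ℤ×ℤ) => q.1 + q.2 = 0)).card = n := by
    refine (Finset.card_nbij (fun a : ℤ×ℤ => ((a, -a) : (ℤ×ℤ)×(ℤ×ℤ))) ?_ ?_ ?_).symm
    · intro a ha
      simp only [Finset.mem_coe, Finset.mem_filter, Finset.mem_product]
      exact ⟨⟨ha, hneg _ ha⟩, by simp⟩
    · intro a _ a' _ h
      exact (Prod.mk.injEq _ _ _ _ ▸ h : _ ∧ _).1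
    · intro q hq
      simp only [Finset.coe_filter, Set.mem_setOf_eq, Finset.mem_product] at hq
      refine ⟨q.1, hq.1.1, ?_⟩
      have e1 : q.2 = -q.1 := eq_neg_of_add_eq_zero_right hq.2
      show (q.1, -q.1) = q
      rw [← e1]
  -- the images
  set A := P.image (fun q : (ℤ×ℤ)×(ℤ×ℤ) => (q, q)) with hA
  set B := P.image (fun q : (ℤ×ℤ)×(ℤ×ℤ) => (q, q.swap)) with hB
  have hAcard : A.card = P.card :=
    Finset.card_image_of_injective _ (fun x y h => (Prod.mk.injEq _ _ _ _ ▸ h : _ ∧ _).1)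
  have hBcard : B.card = P.card :=
    Finset.card_image_of_injective _ (fun x y h => (Prod.mk.injEq _ _ _ _ ▸ h : _ ∧ _).1)
  have hABunion : A ∪ B = T1 := by
    ext p
    simp only [Finset.mem_union, hA, hB, Finset.mem_image, hT1, hT, Finset.mem_filter,
      Finset.mem_product]
    constructor
    · rintro (⟨q, hq, rfl⟩ | ⟨q, hq, rfl⟩) <;>
        simp only [hP, Finset.mem_filter, Finset.mem_product] at hq
      · exact ⟨⟨⟨hq.1, hq.1⟩, rfl⟩, hq.2⟩
      · refine ⟨⟨⟨hq.1, ⟨hq.1.2, hq.1.1⟩⟩, add_comm _ _⟩, hq.2⟩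
    · rintro ⟨⟨⟨⟨ha, hb⟩, hc, hd⟩, heq⟩, hnz⟩
      have h1 : p.1.1.1 + p.1.2.1 = p.2.1.1 + p.2.2.1 := congrArg Prod.fst heq
      have h2 : p.1.1.2 + p.1.2.2 = p.2.1.2 + p.2.2.2 := congrArg Prod.snd heq
      have hnz' : ¬ (p.1.1.1 + p.1.2.1 = 0 ∧ p.1.1.2 + p.1.2.2 = 0) := by
        intro ⟨u, v⟩; exact hnz (Prod.ext u v)
      have key := circle_sum_eq (hnorm_eq _ ha _ hb) (hnorm_eq _ ha _ hc) (hnorm_eq _ ha _ hd)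
        h1 h2 hnz'
      have hmem : p.1 ∈ P := by
        simp only [hP, Finset.mem_filter, Finset.mem_product]
        exact ⟨⟨ha, hb⟩, hnz⟩
      rcases key with ⟨e1, e2⟩ | ⟨e1, e2⟩
      · left; refine ⟨p.1, hmem, ?_⟩
        exact Prod.ext rfl (Prod.ext e1 e2).symm
      · right; refine ⟨p.1, hmem, ?_⟩
        exact Prod.ext rfl (Prod.ext e1 e2).symm
  have hABinter : (A ∩ B).card = n := by
    have himg : A ∩ B = S.image (fun a : ℤ×ℤ => ((((a, a) : (ℤ×ℤ)×(ℤ×ℤ)), ((a, a) : (ℤ×ℤ)×(ℤ×ℤ))))) := by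
      ext p
      simp only [Finset.mem_inter, hA, hB, Finset.mem_image]
      constructor
      · rintro ⟨⟨q, hq, rfl⟩, ⟨q', hq', hqe'⟩⟩
        have e1 : q' = q := congrArg Prod.fst hqe'
        have e2 : q'.swap = q := congrArg Prod.snd hqe'
        have e3 : q.2 = q.1 := by
          have h := congrArg Prod.fst e2
          rw [e1] at h
          simpa using h
        simp only [hP, Finset.mem_filter, Finset.mem_product] at hq
        refine ⟨q.1, hq.1.1, ?_⟩
        have hq1 : ((q.1, q.1) : (ℤ×ℤ) × (ℤ×ℤ)) = q := Prod.ext rfl e3.symm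
        rw [hq1]
      · rintro ⟨x, hx, rfl⟩
        have hxP : ((x, x) : (ℤ×ℤ)×(ℤ×ℤ)) ∈ P := by
          simp only [hP, Finset.mem_filter, Finset.mem_product]
          refine ⟨⟨hx, hx⟩, fun h0 => ?_⟩
          have h1 : x.1 + x.1 = 0 := congrArg Prod.fst h0
          have h2 : x.2 + x.2 = 0 := congrArg Prod.snd h0
          exact hne0 x hx (Prod.ext_iff.2 ⟨by simp; omega, by simp; omega⟩)
        exact ⟨⟨(x, x), hxP, rfl⟩, ⟨(x, x), hxP, rfl⟩⟩
    rw [himg, Finset.card_image_of_injective _ (fun x y h =>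
      (Prod.mk.injEq _ _ _ _ ▸ (Prod.mk.injEq _ _ _ _ ▸ h : _ ∧ _).1 : _ ∧ _).1)]
  have hT1card : T1.card + n = 2 * P.card := by
    have := Finset.card_union_add_card_inter A B
    rw [hABunion, hABinter, hAcard, hBcard] at this
    omega
  -- final arithmetic
  have hPn : P.card + n = n * n := by omega
  have htot : T.card + n = n * n + 2 * P.card := by omega
  have hc : (T.card : ℝ) + n = (n : ℝ) * n + 2 * (P.card : ℝ) := by exact_mod_cast htot
  have hp : (P.card : ℝ) + n = (n : ℝ) * n := by exact_mod_cast hPn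
  nlinarith [hc, hp]

/-- For `u(x) = Σ_{m ∈ S_λ} e^{2πi m·x}`, where `S_λ = {m ∈ ℤ² : |m|² = λ}` is nonempty,
one has `∫_{[0,1]²} |u|⁴ = 3|S_λ|² - 3|S_λ|`. -/

theorem l4_norm_of_circle_exponential_sum
    (lam : ℝ) (hlam : 0 < lam) (S : Finset (ℤ × ℤ))
    (hS : ∀ m : ℤ × ℤ, m ∈ S ↔ ((m.1 : ℝ) ^ 2 + (m.2 : ℝ) ^ 2 = lam))
    (hne : S.Nonempty) :
    (∫ x in Set.Icc (0 : ℝ) 1 ×ˢ Set.Icc (0 : ℝ) 1,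
        ‖∑ m ∈ S, Complex.exp (2 * (Real.pi : ℂ) * Complex.I *
          ((m.1 : ℂ) * (x.1 : ℂ) + (m.2 : ℂ) * (x.2 : ℂ)))‖ ^ 4) =
      3 * (S.card : ℝ) ^ 2 - 3 * (S.card : ℝ) := by
  classical
  set D := Set.Icc (0 : ℝ) 1 ×ˢ Set.Icc (0 : ℝ) 1 with hD
  set F : ℤ × ℤ → ℝ × ℝ → ℂ := fun m x =>
    Complex.exp (2 * (π : ℂ) * Complex.I * ((m.1 : ℂ) * x.1 + (m.2 : ℂ) * x.2)) with hF
  have hFcont : ∀ m, Continuous (F m) := by intro m; rw [hF]; fun_prop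
  have hFint : ∀ m, MeasureTheory.IntegrableOn (F m) D := fun m =>
    ContinuousOn.integrableOn_compact (isCompact_Icc.prod isCompact_Icc) (hFcont m).continuousOn
  have hFadd : ∀ m k x, F m x * F k x = F (m + k) x := by
    intro m k x
    simp only [hF, ← Complex.exp_add]
    congr 1
    simp only [Prod.fst_add, Prod.snd_add]
    push_cast
    ring
  have hFconj : ∀ m x, (starRingEnd ℂ) (F m x) = F (-m) x := by
    intro m x
    simp only [hF, ← Complex.exp_conj]
    congr 1
    simp only [map_mul, map_add, Complex.conj_I, map_ofNat, map_intCast]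
    rw [Complex.conj_ofReal, Complex.conj_ofReal, Complex.conj_ofReal]
    simp only [Prod.fst_neg, Prod.snd_neg]
    push_cast
    ring
  set Q := (S ×ˢ S) ×ˢ (S ×ˢ S) with hQ
  have expand : ∀ x : ℝ × ℝ,
      ((‖∑ m ∈ S, F m x‖ ^ 4 : ℝ) : ℂ) =
        ∑ p ∈ Q, F (p.1.1 + p.1.2 - p.2.1 - p.2.2) x := by
    intro x
    set z := ∑ m ∈ S, F m x with hz
    have h1 : z * z = ∑ q ∈ S ×ˢ S, F (q.1 + q.2) x := by
      rw [hz, Finset.sum_mul_sum, Finset.sum_product]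
      exact Finset.sum_congr rfl fun a _ => Finset.sum_congr rfl fun b _ => hFadd a b x
    have hconjz : (starRingEnd ℂ) z = ∑ m ∈ S, F (-m) x := by
      rw [hz, map_sum]
      exact Finset.sum_congr rfl fun m _ => hFconj m x
    have h2 : (starRingEnd ℂ) z * (starRingEnd ℂ) z = ∑ q ∈ S ×ˢ S, F (-(q.1 + q.2)) x := by
      rw [hconjz, Finset.sum_mul_sum, Finset.sum_product]
      refine Finset.sum_congr rfl fun a _ => Finset.sum_congr rfl fun b _ => ?_
      rw [hFadd]
      congr 1
      abel
    have h3 : ((‖z‖ ^ 4 : ℝ) : ℂ) = z * z * ((starRingEnd ℂ) z * (starRingEnd ℂ) z) := by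
      have e : z * z * ((starRingEnd ℂ) z * (starRingEnd ℂ) z) = (z * (starRingEnd ℂ) z) ^ 2 := by
        ring
      rw [e, Complex.mul_conj]
      rw [Complex.normSq_eq_norm_sq]
      push_cast
      ring
    rw [h3, h1, h2, Finset.sum_mul_sum]
    conv_rhs => rw [hQ, Finset.sum_product]
    refine Finset.sum_congr rfl fun q _ => Finset.sum_congr rfl fun r _ => ?_
    rw [hFadd]
    congr 1
    abel
  have key : ((∫ x in D, ‖∑ m ∈ S, F m x‖ ^ 4 : ℝ) : ℂ) =
      ((3 * (S.card : ℝ) ^ 2 - 3 * (S.card : ℝ) : ℝ) : ℂ) := by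
    rw [show ((∫ x in D, ‖∑ m ∈ S, F m x‖ ^ 4 : ℝ) : ℂ)
        = ∫ x in D, ((‖∑ m ∈ S, F m x‖ ^ 4 : ℝ) : ℂ) from integral_ofReal.symm]
    calc ∫ x in D, ((‖∑ m ∈ S, F m x‖ ^ 4 : ℝ) : ℂ)
        = ∫ x in D, ∑ p ∈ Q, F (p.1.1 + p.1.2 - p.2.1 - p.2.2) x := by
          simp_rw [expand]
      _ = ∑ p ∈ Q, ∫ x in D, F (p.1.1 + p.1.2 - p.2.1 - p.2.2) x :=
          MeasureTheory.integral_finset_sum _ (fun p _ => hFint _)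
      _ = ∑ p ∈ Q, if p.1.1 + p.1.2 - p.2.1 - p.2.2 = 0 then (1 : ℂ) else 0 :=
          Finset.sum_congr rfl fun p _ => exp_prod_integral _
      _ = ∑ p ∈ Q, if p.1.1 + p.1.2 = p.2.1 + p.2.2 then (1 : ℂ) else 0 := by
          refine Finset.sum_congr rfl fun p _ =>
            if_congr (by rw [sub_sub, sub_eq_zero]) rfl rfl
      _ = ((Q.filter (fun p : ((ℤ×ℤ)×(ℤ×ℤ)) × ((ℤ×ℤ)×(ℤ×ℤ)) =>
            p.1.1 + p.1.2 = p.2.1 + p.2.2)).card : ℂ) := by rw [Finset.sum_boole]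
      _ = ((3 * (S.card : ℝ) ^ 2 - 3 * (S.card : ℝ) : ℝ) : ℂ) := by
          rw [← count_lemma lam hlam S hS]
          norm_cast
  exact Complex.ofReal_inj.1 key

end
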